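/- (Inhabited pattern types give inhabited environments) In system P: (1) If Γ ⊩ p : A for a pattern p and the multiset type A is inhabited (there is a closed term u with ⊢ u : A), then every multiset type in the image of Γ is inhabited. (2) Conversely, if Γ ⊢ t : A and every multiset type assigned by Γ is inhabited, then A is inhabited. -/

import Mathlib

/-! # The pair pattern calculus Λ_p and the type system P -/

/-- Patterns: p ::= x | ⟨p,q⟩ -/
inductive Pat : Type
  | var : ℕ → Pat
  | pair : Pat → Pat → Pat
  deriving DecidableEq

/-- Free variables of a pattern. -/
def Pat.fv : Pat → Finset ℕ
  | .var x => {x}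
  | .pair p q => p.fv ∪ q.fv

/-- Linearity: every variable occurs at most once in the pattern. -/
def Pat.Linear : Pat → Prop
  | .var _ => True
  | .pair p q => p.Linear ∧ q.Linear ∧ Disjoint p.fv q.fv

/-- Terms: t ::= x | λp.t | ⟨t,u⟩ | t u | t[p/u] | fail -/
inductive Tm : Type
  | var : ℕ → Tm
  | lam : Pat → Tm → Tm
  | pair : Tm → Tm → Tm
  | app : Tm → Tm → Tm
  | esub : Tm → Pat → Tm → Tm   -- explicit matching t[p/u]
  | fail : Tm
  deriving DecidableEq

/-- Free variables of a term. -/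
def Tm.fv : Tm → Finset ℕ
  | .var x => {x}
  | .lam p t => t.fv \ p.fv
  | .pair t u => t.fv ∪ u.fv
  | .app t u => t.fv ∪ u.fv
  | .esub t p u => (t.fv \ p.fv) ∪ u.fv
  | .fail => ∅

/-- Substitution of u for the free occurrences of x. -/
def Tm.subst (x : ℕ) (u : Tm) : Tm → Tm
  | .var y => if y = x then u else .var y
  | .lam p t => if x ∈ p.fv then .lam p t else .lam p (Tm.subst x u t)
  | .pair a b => .pair (Tm.subst x u a) (Tm.subst x u b)
  | .app a b => .app (Tm.subst x u a) (Tm.subst x u b)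
  | .esub t p v => .esub (if x ∈ p.fv then t else Tm.subst x u t) p (Tm.subst x u v)
  | .fail => .fail

/-- List contexts L ::= □ | L[p/t], represented as lists of explicit matchings
(head = outermost). -/
abbrev LCtx : Type := List (Pat × Tm)

/-- Plugging a term in a list context. -/
def LCtx.plug : LCtx → Tm → Tm
  | [], t => t
  | (p, u) :: L, t => .esub (LCtx.plug L t) p u

/-- Root reduction rules (r₁)–(r₉). -/
inductive Root : Tm → Tm → Prop
  | r1 (L : LCtx) (p t u) : Root (.app (L.plug (.lam p t)) u) (L.plug (.esub t p u))
  | r2 (t x u) : Root (.esub t (.var x) u) (Tm.subst x u t)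
  | r3 (t p₁ p₂ L u₁ u₂) :
      Root (.esub t (.pair p₁ p₂) (LCtx.plug L (.pair u₁ u₂)))
           (LCtx.plug L (.esub (.esub t p₁ u₁) p₂ u₂))
  | r4 (t p₁ p₂ L q u) : Root (.esub t (.pair p₁ p₂) (LCtx.plug L (.lam q u))) .fail
  | r5 (L : LCtx) (t u v) : Root (.app (L.plug (.pair t u)) v) .fail
  | r6 (t p₁ p₂) : Root (.esub t (.pair p₁ p₂) .fail) .fail
  | r7 (L : LCtx) : L ≠ [] → Root (L.plug .fail) .fail
  | r8 (t) : Root (.app .fail t) .fail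
  | r9 (p) : Root (.lam p .fail) .fail

/-- The reduction relation: contextual closure of the root rules. -/
inductive Step : Tm → Tm → Prop
  | root {t t'} : Root t t' → Step t t'
  | lam {t t'} (p) : Step t t' → Step (.lam p t) (.lam p t')
  | pairL {t t'} (u) : Step t t' → Step (.pair t u) (.pair t' u)
  | pairR {u u'} (t) : Step u u' → Step (.pair t u) (.pair t u')
  | appL {t t'} (u) : Step t t' → Step (.app t u) (.app t' u)
  | appR {u u'} (t) : Step u u' → Step (.app t u) (.app t u')
  | subL {t t'} (p u) : Step t t' → Step (.esub t p u) (.esub t' p u)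
  | subR {u u'} (t p) : Step u u' → Step (.esub t p u) (.esub t p u')

/-- Root rules without the substitution rule (r₂). -/
inductive RootA0 : Tm → Tm → Prop
  | r1 (L : LCtx) (p t u) : RootA0 (.app (L.plug (.lam p t)) u) (L.plug (.esub t p u))
  | r3 (t p₁ p₂ L u₁ u₂) :
      RootA0 (.esub t (.pair p₁ p₂) (LCtx.plug L (.pair u₁ u₂)))
             (LCtx.plug L (.esub (.esub t p₁ u₁) p₂ u₂))
  | r4 (t p₁ p₂ L q u) : RootA0 (.esub t (.pair p₁ p₂) (LCtx.plug L (.lam q u))) .fail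
  | r5 (L : LCtx) (t u v) : RootA0 (.app (L.plug (.pair t u)) v) .fail
  | r6 (t p₁ p₂) : RootA0 (.esub t (.pair p₁ p₂) .fail) .fail
  | r7 (L : LCtx) : L ≠ [] → RootA0 (L.plug .fail) .fail
  | r8 (t) : RootA0 (.app .fail t) .fail
  | r9 (p) : RootA0 (.lam p .fail) .fail

/-- Reduction without rule (r₂). -/
inductive StepA0 : Tm → Tm → Prop
  | root {t t'} : RootA0 t t' → StepA0 t t'
  | lam {t t'} (p) : StepA0 t t' → StepA0 (.lam p t) (.lam p t')
  | pairL {t t'} (u) : StepA0 t t' → StepA0 (.pair t u) (.pair t' u)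
  | pairR {u u'} (t) : StepA0 u u' → StepA0 (.pair t u) (.pair t u')
  | appL {t t'} (u) : StepA0 t t' → StepA0 (.app t u) (.app t' u)
  | appR {u u'} (t) : StepA0 u u' → StepA0 (.app t u) (.app t u')
  | subL {t t'} (p u) : StepA0 t t' → StepA0 (.esub t p u) (.esub t' p u)
  | subR {u u'} (t p) : StepA0 u u' → StepA0 (.esub t p u) (.esub t p u')

/-- Many-step reduction. -/
abbrev Steps : Tm → Tm → Prop := Relation.ReflTransGen Step

/-! ## Types and the type system P -/

/-- Types σ ::= α | ⟨A,B⟩ | A → σ, where multiset types A are represented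
as lists of types. -/
inductive Ty : Type
  | base : ℕ → Ty
  | prod : List Ty → List Ty → Ty
  | arr : List Ty → Ty → Ty

/-- Typing environments: functions from variables to multiset types. -/
def Env : Type := ℕ → List Ty

/-- Sum of environments (pointwise multiset union). -/
def Env.add (Γ Δ : Env) : Env := fun x => Γ x ++ Δ x

/-- Empty environment. -/
def Env.empty : Env := fun _ => []

/-- The environment x : A. -/
def Env.single (x : ℕ) (A : List Ty) : Env := fun y => if y = x then A else []

/-- Γ|_p : restriction of Γ to the free variables of p. -/
def Env.restrict (Γ : Env) (p : Pat) : Env := fun x => if x ∈ p.fv then Γ x else []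

/-- Γ \ Γ|_p. -/
def Env.erase (Γ : Env) (p : Pat) : Env := fun x => if x ∈ p.fv then [] else Γ x

/-- Pattern typing Γ ⊩ p : A. -/
inductive PatTy : Env → Pat → List Ty → Prop
  | var (x : ℕ) (A : List Ty) : PatTy (Env.single x A) (.var x) A
  | pair {Γ Δ p q A B} : PatTy Γ p A → PatTy Δ q B → Disjoint p.fv q.fv →
      PatTy (Γ.add Δ) (.pair p q) [Ty.prod A B]

mutual
  /-- Typing derivations Γ ⊢ t : σ of system P (rules ax, abs, app, pair, sub). -/
  inductive TDeriv : Env → Tm → Ty → Type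
    | ax (x : ℕ) (σ : Ty) : TDeriv (Env.single x [σ]) (.var x) σ
    | abs {Γ t σ p A} : TDeriv Γ t σ → PatTy (Γ.restrict p) p A →
        TDeriv (Γ.erase p) (.lam p t) (.arr A σ)
    | app {Γ Δ t u A σ} : TDeriv Γ t (.arr A σ) → MDeriv Δ u A →
        TDeriv (Γ.add Δ) (.app t u) σ
    | pair {Γ Δ t u A B} : MDeriv Γ t A → MDeriv Δ u B →
        TDeriv (Γ.add Δ) (.pair t u) (.prod A B)
    | esub {Γ Δ t σ p A u} : TDeriv Γ t σ → PatTy (Γ.restrict p) p A → MDeriv Δ u A →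
        TDeriv ((Γ.erase p).add Δ) (.esub t p u) σ
  /-- Multiset typing derivations Γ ⊢ t : A (the rule (many)). -/
  inductive MDeriv : Env → Tm → List Ty → Type
    | nil (t : Tm) : MDeriv Env.empty t []
    | cons {Γ Δ t σ A} : TDeriv Γ t σ → MDeriv Δ t A → MDeriv (Γ.add Δ) t (σ :: A)
end

mutual
  /-- The measure of a derivation: number of typing rules except (many). -/
  def measT : ∀ {Γ t σ}, TDeriv Γ t σ → ℕ
    | _, _, _, .ax _ _ => 1
    | _, _, _, .abs d _ => measT d + 1
    | _, _, _, .app d m => measT d + measM m + 1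
    | _, _, _, .pair m n => measM m + measM n + 1
    | _, _, _, .esub d _ m => measT d + measM m + 1
  def measM : ∀ {Γ t A}, MDeriv Γ t A → ℕ
    | _, _, _, .nil _ => 0
    | _, _, _, .cons d m => measT d + measM m
end

/-- Term contexts with a single hole. -/
inductive TmCtx : Type
  | hole : TmCtx
  | lam : Pat → TmCtx → TmCtx
  | pairL : TmCtx → Tm → TmCtx
  | pairR : Tm → TmCtx → TmCtx
  | appL : TmCtx → Tm → TmCtx
  | appR : Tm → TmCtx → TmCtx
  | subL : TmCtx → Pat → Tm → TmCtx
  | subR : Tm → Pat → TmCtx → TmCtx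

/-- Plugging a term in a term context. -/
def TmCtx.plug : TmCtx → Tm → Tm
  | .hole, t => t
  | .lam p C, t => .lam p (C.plug t)
  | .pairL C u, t => .pair (C.plug t) u
  | .pairR u C, t => .pair u (C.plug t)
  | .appL C u, t => .app (C.plug t) u
  | .appR u C, t => .app u (C.plug t)
  | .subL C p u, t => .esub (C.plug t) p u
  | .subR u p C, t => .esub u p (C.plug t)

mutual
  /-- Typed occurrences of a derivation. -/
  def tocT : ∀ {Γ t σ}, TDeriv Γ t σ → Set TmCtx
    | _, _, _, .ax _ _ => {TmCtx.hole}
    | _, _, _, @TDeriv.abs _ _ _ p _ d _ =>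
        {TmCtx.hole} ∪ (TmCtx.lam p) '' tocT d
    | _, _, _, @TDeriv.app _ _ t u _ _ d m =>
        {TmCtx.hole} ∪ (fun C => TmCtx.appL C u) '' tocT d ∪ (fun C => TmCtx.appR t C) '' tocM m
    | _, _, _, @TDeriv.pair _ _ t u _ _ m n =>
        {TmCtx.hole} ∪ (fun C => TmCtx.pairL C u) '' tocM m ∪ (fun C => TmCtx.pairR t C) '' tocM n
    | _, _, _, @TDeriv.esub _ _ t _ p _ u d _ m =>
        {TmCtx.hole} ∪ (fun C => TmCtx.subL C p u) '' tocT d ∪ (fun C => TmCtx.subR t p C) '' tocM m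
  def tocM : ∀ {Γ t A}, MDeriv Γ t A → Set TmCtx
    | _, _, _, .nil _ => ∅
    | _, _, _, .cons d m => tocT d ∪ tocM m
end

/-- Head contexts H ::= □ | λp.H | H t | H[p/t]. -/
inductive HCtx : Type
  | hole : HCtx
  | lam : Pat → HCtx → HCtx
  | app : HCtx → Tm → HCtx
  | esub : HCtx → Pat → Tm → HCtx

/-- Plugging a term in a head context. -/
def HCtx.plug : HCtx → Tm → Tm
  | .hole, t => t
  | .lam p H, t => .lam p (H.plug t)
  | .app H u, t => .app (H.plug t) u
  | .esub H p u, t => .esub (H.plug t) p u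

mutual
  /-- K-canonical forms: K ::= x | K t | K[⟨p,q⟩/K]. -/
  inductive IsK : Tm → Prop
    | var (x : ℕ) : IsK (.var x)
    | app {t} (u) : IsK t → IsK (.app t u)
    | esub {t u} (p q) : IsK t → IsK u → IsK (.esub t (.pair p q) u)
  /-- Canonical forms: J ::= λp.J | ⟨t,t⟩ | K | J[⟨p,q⟩/K]. -/
  inductive IsJ : Tm → Prop
    | lam {t} (p) : IsJ t → IsJ (.lam p t)
    | pair (t u : Tm) : IsJ (.pair t u)
    | ofK {t} : IsK t → IsJ t
    | esub {t u} (p q) : IsJ t → IsK u → IsJ (.esub t (.pair p q) u)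
end

/-- Pure K-canonical forms: K′ ::= x | K′ t. -/
inductive IsK' : Tm → Prop
  | var (x : ℕ) : IsK' (.var x)
  | app {t} (u) : IsK' t → IsK' (.app t u)

/-- Pure canonical forms: J′ ::= λp.J′ | ⟨t,t⟩ | K′ | J′[⟨p,q⟩/K′]. -/
inductive IsJ' : Tm → Prop
  | lam {t} (p) : IsJ' t → IsJ' (.lam p t)
  | pair (t u : Tm) : IsJ' (.pair t u)
  | ofK {t} : IsK' t → IsJ' t
  | esub {t u} (p q) : IsJ' t → IsK' u → IsJ' (.esub t (.pair p q) u)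

/-- A multiset type is inhabited if some closed term has it. -/
def MInhab (A : List Ty) : Prop := ∃ u : Tm, u.fv = ∅ ∧ Nonempty (MDeriv Env.empty u A)

/-- An environment is inhabited if all the multiset types it assigns are inhabited. -/
def EnvInhab (Γ : Env) : Prop := ∀ x, Γ x ≠ [] → MInhab (Γ x)

/-- C₁ → ⋯ → Cₙ → σ. -/
def mkArr : List (List Ty) → Ty → Ty
  | [], σ => σ
  | A :: Cs, σ => .arr A (mkArr Cs σ)

/-- A term is solvable if some head context closes it and sends it to a pair. -/
def Solvable (t : Tm) : Prop :=
  ∃ H : HCtx, (H.plug t).fv = ∅ ∧ ∃ u v : Tm, Steps (H.plug t) (.pair u v)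

/-! ## Auxiliary definitions and lemmas -/

def killE (Γ : Env) (x : ℕ) : Env := fun y => if y = x then [] else Γ y

def pweight : Pat → ℕ
  | .var _ => 1
  | .pair p q => pweight p + pweight q + 1

def weight : Tm → ℕ
  | .var _ => 1
  | .lam p t => pweight p + weight t + 1
  | .pair t u => weight t + weight u + 1
  | .app t u => weight t + weight u + 1
  | .esub t p u => weight t + pweight p + weight u + 1
  | .fail => 1

theorem add_eq_empty {Γ Δ : Env} (h : Env.empty = Γ.add Δ) :
    Γ = Env.empty ∧ Δ = Env.empty := by
  constructor <;> funext y <;>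
    · have := congrFun h y
      simp only [Env.empty, Env.add] at this ⊢
      rcases List.append_eq_nil_iff.mp this.symm with ⟨h1, h2⟩
      simp [h1, h2]

theorem empty_add_empty : Env.add Env.empty Env.empty = Env.empty := by
  funext y; simp [Env.add, Env.empty]

theorem add_empty (Γ : Env) : Γ.add Env.empty = Γ := by
  funext y; simp [Env.add, Env.empty]

theorem empty_add (Γ : Env) : Env.empty.add Γ = Γ := by
  funext y; simp [Env.add, Env.empty]

theorem killE_add (Γ Δ : Env) (x : ℕ) :
    killE (Γ.add Δ) x = (killE Γ x).add (killE Δ x) := by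
  funext y; by_cases h : y = x <;> simp [killE, Env.add, h]

theorem killE_of_nil {Γ : Env} {x : ℕ} (h : Γ x = []) : killE Γ x = Γ := by
  funext y
  by_cases hy : y = x
  · subst hy; simp [killE, h]
  · simp [killE, hy]

theorem killE_empty (x : ℕ) : killE Env.empty x = Env.empty :=
  killE_of_nil rfl

def castT {Γ Γ' : Env} {t : Tm} {σ : Ty} (h : Γ = Γ') (d : TDeriv Γ t σ) : TDeriv Γ' t σ :=
  h ▸ d

def castM {Γ Γ' : Env} {t : Tm} {A : List Ty} (h : Γ = Γ') (d : MDeriv Γ t A) : MDeriv Γ' t A :=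
  h ▸ d

theorem measT_castT {Γ Γ' : Env} {t : Tm} {σ : Ty} (h : Γ = Γ') (d : TDeriv Γ t σ) :
    measT (castT h d) = measT d := by subst h; rfl

theorem measM_castM {Γ Γ' : Env} {t : Tm} {A : List Ty} (h : Γ = Γ') (d : MDeriv Γ t A) :
    measM (castM h d) = measM d := by subst h; rfl

theorem measT_cast {Γ Γ' : Env} {t : Tm} {σ : Ty} (h : Γ = Γ') (d : TDeriv Γ t σ) :
    measT (h ▸ d : TDeriv Γ' t σ) = measT d := by subst h; rfl

theorem measM_cast {Γ Γ' : Env} {t : Tm} {A : List Ty} (h : Γ = Γ') (d : MDeriv Γ t A) :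
    measM (h ▸ d : MDeriv Γ' t A) = measM d := by subst h; rfl

/-- support of a pattern environment -/
theorem patSup {Γ : Env} {p : Pat} {A : List Ty} (h : PatTy Γ p A) :
    ∀ x, x ∉ p.fv → Γ x = [] := by
  induction h with
  | var y B => intro x hx; simp [Pat.fv] at hx; simp [Env.single, hx]
  | pair h1 h2 _ ih1 ih2 =>
      intro x hx
      simp [Pat.fv] at hx
      simp [Env.add, ih1 x hx.1, ih2 x hx.2]

mutual
theorem supT : ∀ {Γ t σ}, TDeriv Γ t σ → ∀ x, x ∉ t.fv → Γ x = []
  | _, _, _, .ax y σ => by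
      intro x hx; simp [Tm.fv] at hx; simp [Env.single, hx]
  | _, _, _, @TDeriv.abs Γ t σ p A d hp => by
      intro x hx
      simp [Tm.fv] at hx
      by_cases hxp : x ∈ p.fv
      · simp [Env.erase, hxp]
      · simp [Env.erase, hxp, supT d x (fun h => hxp (hx h))]
  | _, _, _, @TDeriv.app Γ Δ t u A σ d m => by
      intro x hx; simp [Tm.fv] at hx
      simp [Env.add, supT d x hx.1, supM m x hx.2]
  | _, _, _, @TDeriv.pair Γ Δ t u A B m n => by
      intro x hx; simp [Tm.fv] at hx
      simp [Env.add, supM m x hx.1, supM n x hx.2]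
  | _, _, _, @TDeriv.esub Γ Δ t σ p A u d hp m => by
      intro x hx; simp [Tm.fv] at hx
      have h2 := supM m x hx.2
      by_cases hxp : x ∈ p.fv
      · simp [Env.add, Env.erase, hxp, h2]
      · simp [Env.add, Env.erase, hxp, h2, supT d x (fun h => hxp (hx.1 h))]
theorem supM : ∀ {Γ t A}, MDeriv Γ t A → ∀ x, x ∉ t.fv → Γ x = []
  | _, _, _, .nil t => by intro x _; rfl
  | _, _, _, .cons d m => by
      intro x hx; simp [Env.add, supT d x hx, supM m x hx]
end

theorem env_eq_empty_of_closed {Γ : Env} {t : Tm} {A : List Ty} (m : MDeriv Γ t A)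
    (h : t.fv = ∅) : Γ = Env.empty := by
  funext y; exact supM m y (by simp [h])

theorem fv_subst (x : ℕ) (u : Tm) :
    ∀ s : Tm, ∀ y, y ∈ (Tm.subst x u s).fv → (y ∈ s.fv ∧ y ≠ x) ∨ y ∈ u.fv := by
  intro s
  induction s with
  | fail => intro y hy; simp [Tm.subst, Tm.fv] at hy
  | var z =>
      intro y hy
      by_cases h : z = x <;> simp only [Tm.subst, h, if_pos, if_neg, ite_true, ite_false] at hy
      · exact Or.inr hy
      · simp [Tm.fv] at hy
        subst hy
        exact Or.inl ⟨by simp [Tm.fv], h⟩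
  | lam p t ih =>
      intro y hy
      by_cases h : x ∈ p.fv <;> simp only [Tm.subst, h, ite_true, ite_false] at hy <;>
        simp [Tm.fv] at hy ⊢
      · refine Or.inl ⟨⟨hy.1, hy.2⟩, ?_⟩
        rintro rfl; exact hy.2 h
      · rcases ih y hy.1 with ⟨h1, h2⟩ | h1
        · exact Or.inl ⟨⟨h1, hy.2⟩, h2⟩
        · exact Or.inr h1
  | pair a b iha ihb =>
      intro y hy
      simp [Tm.subst, Tm.fv] at hy ⊢
      rcases hy with hy | hy
      · rcases iha y hy with ⟨h1, h2⟩ | h1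
        · exact Or.inl ⟨Or.inl h1, h2⟩
        · exact Or.inr h1
      · rcases ihb y hy with ⟨h1, h2⟩ | h1
        · exact Or.inl ⟨Or.inr h1, h2⟩
        · exact Or.inr h1
  | app a b iha ihb =>
      intro y hy
      simp [Tm.subst, Tm.fv] at hy ⊢
      rcases hy with hy | hy
      · rcases iha y hy with ⟨h1, h2⟩ | h1
        · exact Or.inl ⟨Or.inl h1, h2⟩
        · exact Or.inr h1
      · rcases ihb y hy with ⟨h1, h2⟩ | h1
        · exact Or.inl ⟨Or.inr h1, h2⟩
        · exact Or.inr h1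
  | esub t p v iht ihv =>
      intro y hy
      by_cases h : x ∈ p.fv <;> simp only [Tm.subst, h, ite_true, ite_false] at hy <;>
        simp [Tm.fv] at hy ⊢
      · rcases hy with ⟨h1, h2⟩ | h1
        · refine Or.inl ⟨Or.inl ⟨h1, h2⟩, ?_⟩
          rintro rfl; exact h2 h
        · rcases ihv y h1 with ⟨h2, h3⟩ | h2
          · exact Or.inl ⟨Or.inr h2, h3⟩
          · exact Or.inr h2
      · rcases hy with ⟨h1, h2⟩ | h1
        · rcases iht y h1 with ⟨h3, h4⟩ | h3
          · exact Or.inl ⟨Or.inl ⟨h3, h2⟩, h4⟩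
          · exact Or.inr h3
        · rcases ihv y h1 with ⟨h2, h3⟩ | h2
          · exact Or.inl ⟨Or.inr h2, h3⟩
          · exact Or.inr h2

theorem fv_subst_closed {x : ℕ} {u s : Tm} (hu : u.fv = ∅) (hs : s.fv ⊆ {x}) :
    (Tm.subst x u s).fv = ∅ := by
  apply Finset.eq_empty_of_forall_notMem
  intro y hy
  rcases fv_subst x u s y hy with ⟨h1, h2⟩ | h1
  · exact h2 (by simpa using hs h1)
  · rw [hu] at h1; simp at h1
/-- Splitting a closed multiset derivation. -/
theorem msplit : ∀ (A : List Ty) {B : List Ty} {u : Tm} (m : MDeriv Env.empty u (A ++ B)),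
    ∃ (m₁ : MDeriv Env.empty u A) (m₂ : MDeriv Env.empty u B),
      measM m₁ + measM m₂ = measM m := by
  intro A
  induction A with
  | nil => intro B u m; exact ⟨.nil u, m, by simp [measM]⟩
  | cons σ A ih =>
      intro B u m
      generalize hE : Env.empty = E at m
      cases m with
      | cons d m' =>
        rcases add_eq_empty hE with ⟨h1, h2⟩
        subst h1; subst h2
        rcases ih m' with ⟨m₁, m₂, hm⟩
        refine ⟨castM empty_add_empty (MDeriv.cons d m₁), m₂, ?_⟩
        erw [measM_castM]
        simp only [measM] at *
        show measT d + measM m₁ + measM m₂ = measT d + measM m'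
        omega
theorem restrict_var (Γ : Env) (x : ℕ) :
    Γ.restrict (.var x) = Env.single x (Γ x) := by
  funext y
  by_cases h : y = x
  · subst h; simp [Env.restrict, Env.single, Pat.fv]
  · simp [Env.restrict, Env.single, Pat.fv, h]

theorem erase_var_add_empty (Γ : Env) (x : ℕ) :
    (Γ.erase (.var x)).add Env.empty = killE Γ x := by
  funext y
  by_cases h : y = x <;> simp [Env.erase, Env.add, Env.empty, Pat.fv, killE, h]

/-- Closing one variable by an explicit substitution. -/
theorem close1 : ∀ {Γ : Env} {t : Tm} {A : List Ty}, MDeriv Γ t A → ∀ (x : ℕ) {u : Tm},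
    MDeriv Env.empty u (Γ x) → Nonempty (MDeriv (killE Γ x) (.esub t (.var x) u) A)
  | _, _, _, .nil t => by
      intro x u mu
      exact ⟨castM (killE_empty x).symm (.nil _)⟩
  | _, _, _, @MDeriv.cons Γ Δ t σ A d m => by
      intro x u mu
      have mu' : MDeriv Env.empty u (Γ x ++ Δ x) := mu
      rcases msplit (Γ x) mu' with ⟨m₁, m₂, -⟩
      have pt : PatTy (Γ.restrict (.var x)) (.var x) (Γ x) :=
        (restrict_var Γ x).symm ▸ PatTy.var x (Γ x)
      have d' : TDeriv (killE Γ x) (.esub t (.var x) u) σ :=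
        castT (erase_var_add_empty Γ x) (TDeriv.esub d pt m₁)
      rcases close1 m x m₂ with ⟨m'⟩
      exact ⟨castM (killE_add Γ Δ x).symm (.cons d' m')⟩

theorem minhab_nil : MInhab [] := ⟨.fail, rfl, ⟨.nil _⟩⟩

theorem part2_aux : ∀ (l : List ℕ) (Γ : Env) (t : Tm) (A : List Ty),
    Nonempty (MDeriv Γ t A) → EnvInhab Γ → t.fv ⊆ l.toFinset → MInhab A := by
  intro l
  induction l with
  | nil =>
      intro Γ t A ⟨m⟩ _ hfv
      have ht : t.fv = ∅ := Finset.subset_empty.mp (by simpa using hfv)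
      exact ⟨t, ht, ⟨castM (env_eq_empty_of_closed m ht) m⟩⟩
  | cons x l ih =>
      intro Γ t A ⟨m⟩ hΓ hfv
      have hGx : MInhab (Γ x) := by
        by_cases h : Γ x = []
        · rw [h]; exact minhab_nil
        · exact hΓ x h
      rcases hGx with ⟨u, hu, ⟨mu⟩⟩
      rcases close1 m x mu with ⟨m'⟩
      apply ih (killE Γ x) (.esub t (.var x) u) A ⟨m'⟩
      · intro y hy
        by_cases h : y = x
        · subst h; simp [killE] at hy
        · simpa [killE, h] using hΓ y (by simpa [killE, h] using hy)
      · intro y hy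
        simp only [Tm.fv, Pat.fv, hu, Finset.union_empty, Finset.mem_sdiff,
          Finset.mem_singleton] at hy
        have := hfv (show y ∈ t.fv by
          have h2 := hy
          exact h2.1)
        simp only [List.toFinset_cons, Finset.mem_insert, List.mem_toFinset] at this
        rcases this with h | h
        · exact absurd h hy.2
        · simpa using h
def castTm {Γ : Env} {s s' : Tm} {σ : Ty} (h : s = s') (d : TDeriv Γ s σ) : TDeriv Γ s' σ :=
  h ▸ d

theorem measT_castTm {Γ : Env} {s s' : Tm} {σ : Ty} (h : s = s') (d : TDeriv Γ s σ) :
    measT (castTm h d) = measT d := by subst h; rfl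

def castA {Γ : Env} {u : Tm} {A A' : List Ty} (h : A = A') (m : MDeriv Γ u A) : MDeriv Γ u A' :=
  h ▸ m

theorem measM_castA {Γ : Env} {u : Tm} {A A' : List Ty} (h : A = A') (m : MDeriv Γ u A) :
    measM (castA h m) = measM m := by subst h; rfl

theorem restrict_kill {Γ : Env} {p : Pat} {x : ℕ} (h : x ∉ p.fv) :
    (killE Γ x).restrict p = Γ.restrict p := by
  funext y
  by_cases hy : y ∈ p.fv
  · have : y ≠ x := fun e => h (e ▸ hy)
    simp [Env.restrict, killE, hy, this]
  · simp [Env.restrict, hy]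

theorem erase_kill {Γ : Env} {p : Pat} {x : ℕ} (h : x ∉ p.fv) :
    (killE Γ x).erase p = killE (Γ.erase p) x := by
  funext y
  by_cases hy : y ∈ p.fv
  · have : y ≠ x := fun e => h (e ▸ hy)
    simp [Env.erase, killE, hy, this]
  · by_cases hx : y = x <;> simp [Env.erase, killE, hy, hx]

theorem measM_nilA : ∀ {Γ : Env} {u : Tm} (m : MDeriv Γ u []), measM m = 0
  | _, _, .nil _ => rfl

/-- Inverting a singleton multiset derivation at the empty environment. -/
theorem minvert1 {u : Tm} {σ : Ty} (m : MDeriv Env.empty u [σ]) :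
    ∃ d : TDeriv Env.empty u σ, measT d = measM m := by
  generalize hE : Env.empty = E at m
  cases m with
  | cons d m' =>
    rcases add_eq_empty hE with ⟨h1, h2⟩
    subst h1; subst h2
    exact ⟨d, by simp [measM, measM_nilA m']; rfl⟩

mutual
theorem substT : ∀ {Γ s σ} (d : TDeriv Γ s σ) (x : ℕ) {u : Tm}, u.fv = ∅ →
    ∀ (m : MDeriv Env.empty u (Γ x)),
    ∃ d' : TDeriv (killE Γ x) (Tm.subst x u s) σ, measT d' ≤ measT d + measM m
  | _, _, _, .ax y σ => by
      intro x u hu m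
      by_cases h : x = y
      · subst h
        have hA : Env.single x [σ] x = [σ] := by simp [Env.single]
        have hm := measM_castA hA m
        rcases minvert1 (castA hA m) with ⟨du, hdu⟩
        have hterm : Tm.subst x u (.var x) = u := by simp [Tm.subst]
        have henv : Env.empty = killE (Env.single x [σ]) x := by
          funext z; by_cases hz : z = x <;> simp [killE, Env.single, Env.empty, hz]
        refine ⟨castT henv (castTm hterm.symm du), ?_⟩
        rw [measT_castT, measT_castTm, hdu, hm]
        simp [measT]
      · have hA : Env.single y [σ] x = [] := by simp [Env.single, h]
        have hyx : ¬ y = x := fun e => h e.symm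
        have hterm : Tm.subst x u (.var y) = .var y := by
          simp [Tm.subst, hyx]
        have henv : Env.single y [σ] = killE (Env.single y [σ]) x := (killE_of_nil hA).symm
        refine ⟨castT henv (castTm hterm.symm (.ax y σ)), ?_⟩
        rw [measT_castT, measT_castTm]
        simp [measT]
  | _, _, _, @TDeriv.abs Γ t σ p A ds pt => by
      intro x u hu m
      by_cases h : x ∈ p.fv
      · have hterm : Tm.subst x u (.lam p t) = .lam p t := by simp [Tm.subst, h]
        have hnil : (Γ.erase p) x = [] := by simp [Env.erase, h]
        refine ⟨castT (killE_of_nil hnil).symm (castTm hterm.symm (TDeriv.abs ds pt)), ?_⟩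
        rw [measT_castT, measT_castTm]
        simp [measT]
      · have hGx : (Γ.erase p) x = Γ x := by simp [Env.erase, h]
        have hm := measM_castA hGx m
        rcases substT ds x hu (castA hGx m) with ⟨d', hd'⟩
        have pt' : PatTy ((killE Γ x).restrict p) p A := (restrict_kill h).symm ▸ pt
        have hterm : Tm.subst x u (.lam p t) = .lam p (Tm.subst x u t) := by
          simp [Tm.subst, h]
        refine ⟨castT (erase_kill h) (castTm hterm.symm (TDeriv.abs d' pt')), ?_⟩
        rw [measT_castT, measT_castTm]
        simp only [measT] at *
        omega
  | _, _, _, @TDeriv.app Γ Δ a b A σ ds mu => by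
      intro x u hu m
      rcases msplit (Γ x) (show MDeriv Env.empty u (Γ x ++ Δ x) from m) with ⟨m₁, m₂, hm⟩
      rcases substT ds x hu m₁ with ⟨d', hd'⟩
      rcases substM mu x hu m₂ with ⟨mu', hmu'⟩
      refine ⟨castT (killE_add Γ Δ x).symm (TDeriv.app d' mu'), ?_⟩
      erw [measT_castT]
      simp only [measT] at *
      change measM m₁ + measM m₂ = measM m at hm
      omega
  | _, _, _, @TDeriv.pair Γ Δ a b A B ma mb => by
      intro x u hu m
      rcases msplit (Γ x) (show MDeriv Env.empty u (Γ x ++ Δ x) from m) with ⟨m₁, m₂, hm⟩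
      rcases substM ma x hu m₁ with ⟨ma', hma'⟩
      rcases substM mb x hu m₂ with ⟨mb', hmb'⟩
      refine ⟨castT (killE_add Γ Δ x).symm (TDeriv.pair ma' mb'), ?_⟩
      erw [measT_castT]
      simp only [measT] at *
      change measM m₁ + measM m₂ = measM m at hm
      omega
  | _, _, _, @TDeriv.esub Γ Δ t σ p A v ds pt mv => by
      intro x u hu m
      rcases msplit ((Γ.erase p) x) (show MDeriv Env.empty u ((Γ.erase p) x ++ Δ x) from m)
        with ⟨m₁, m₂, hm⟩
      rcases substM mv x hu m₂ with ⟨mv', hmv'⟩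
      by_cases h : x ∈ p.fv
      · have hterm : Tm.subst x u (.esub t p v) = .esub t p (Tm.subst x u v) := by
          simp [Tm.subst, h]
        have henv : (Γ.erase p).add (killE Δ x) = killE ((Γ.erase p).add Δ) x := by
          rw [killE_add, killE_of_nil (show (Γ.erase p) x = [] by simp [Env.erase, h])]
        refine ⟨castT henv (castTm hterm.symm (TDeriv.esub ds pt mv')), ?_⟩
        rw [measT_castT, measT_castTm]
        simp only [measT] at *
        change measM m₁ + measM m₂ = measM m at hm
        omega
      · have hGx : (Γ.erase p) x = Γ x := by simp [Env.erase, h]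
        have hm1 := measM_castA hGx m₁
        rcases substT ds x hu (castA hGx m₁) with ⟨ds', hds'⟩
        have pt' : PatTy ((killE Γ x).restrict p) p A := (restrict_kill h).symm ▸ pt
        have hterm : Tm.subst x u (.esub t p v) = .esub (Tm.subst x u t) p (Tm.subst x u v) := by
          simp [Tm.subst, h]
        have henv : ((killE Γ x).erase p).add (killE Δ x) = killE ((Γ.erase p).add Δ) x := by
          rw [erase_kill h, killE_add]
        refine ⟨castT henv (castTm hterm.symm (TDeriv.esub ds' pt' mv')), ?_⟩
        rw [measT_castT, measT_castTm]
        simp only [measT] at *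
        change measM m₁ + measM m₂ = measM m at hm
        omega
theorem substM : ∀ {Γ s A} (dm : MDeriv Γ s A) (x : ℕ) {u : Tm}, u.fv = ∅ →
    ∀ (m : MDeriv Env.empty u (Γ x)),
    ∃ dm' : MDeriv (killE Γ x) (Tm.subst x u s) A, measM dm' ≤ measM dm + measM m
  | _, _, _, .nil t => by
      intro x u hu m
      exact ⟨castM (killE_empty x).symm (.nil _), by rw [measM_castM]; simp [measM]⟩
  | _, _, _, @MDeriv.cons Γ Δ t σ A d dm => by
      intro x u hu m
      rcases msplit (Γ x) (show MDeriv Env.empty u (Γ x ++ Δ x) from m) with ⟨m₁, m₂, hm⟩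
      rcases substT d x hu m₁ with ⟨d', hd'⟩
      rcases substM dm x hu m₂ with ⟨dm', hdm'⟩
      refine ⟨castM (killE_add Γ Δ x).symm (MDeriv.cons d' dm'), ?_⟩
      rw [measM_castM]
      simp only [measM] at *
      change measM m₁ + measM m₂ = measM m at hm
      omega
end
/-! ## Inversion lemmas -/

theorem no_fail_ty : ∀ {Γ σ}, TDeriv Γ .fail σ → False := fun d => nomatch d

theorem no_lam_prod : ∀ {Γ p s A B}, TDeriv Γ (.lam p s) (.prod A B) → False := fun d => nomatch d

theorem no_pair_arr : ∀ {Γ a b A σ}, TDeriv Γ (.pair a b) (.arr A σ) → False := fun d => nomatch d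

theorem invert_pair : ∀ {Γ a b A B} (d : TDeriv Γ (.pair a b) (.prod A B)),
    ∃ (Γ₁ Γ₂ : Env) (m₁ : MDeriv Γ₁ a A) (m₂ : MDeriv Γ₂ b B),
      Γ = Γ₁.add Γ₂ ∧ measM m₁ + measM m₂ + 1 = measT d
  | _, _, _, _, _, .pair m₁ m₂ => ⟨_, _, m₁, m₂, rfl, rfl⟩

theorem invert_abs : ∀ {Γ p s A σ} (d : TDeriv Γ (.lam p s) (.arr A σ)),
    ∃ (Γ' : Env) (ds : TDeriv Γ' s σ), PatTy (Γ'.restrict p) p A ∧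
      Γ = Γ'.erase p ∧ measT d = measT ds + 1
  | _, _, _, _, _, .abs ds pt => ⟨_, ds, pt, rfl, rfl⟩

theorem invert_app : ∀ {Γ a b σ} (d : TDeriv Γ (.app a b) σ),
    ∃ (Γ₁ Δ : Env) (A : List Ty) (ds : TDeriv Γ₁ a (.arr A σ)) (mb : MDeriv Δ b A),
      Γ = Γ₁.add Δ ∧ measT d = measT ds + measM mb + 1
  | _, _, _, _, .app ds mb => ⟨_, _, _, ds, mb, rfl, rfl⟩

theorem invert_esub : ∀ {Γ t p v σ} (d : TDeriv Γ (.esub t p v) σ),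
    ∃ (Γ₁ Δ : Env) (A : List Ty) (ds : TDeriv Γ₁ t σ) (mv : MDeriv Δ v A),
      PatTy (Γ₁.restrict p) p A ∧ Γ = (Γ₁.erase p).add Δ ∧
      measT d = measT ds + measM mv + 1
  | _, _, _, _, _, .esub ds pt mv => ⟨_, _, _, ds, mv, pt, rfl, rfl⟩

theorem patty_var_inv {Γ : Env} {x : ℕ} {A : List Ty} (h : PatTy Γ (.var x) A) :
    Γ = Env.single x A := by cases h; rfl

theorem patty_pair_inv {Γ : Env} {p q : Pat} {A : List Ty} (h : PatTy Γ (.pair p q) A) :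
    ∃ (Γ₁ Γ₂ : Env) (A₁ A₂ : List Ty), PatTy Γ₁ p A₁ ∧ PatTy Γ₂ q A₂ ∧
      Disjoint p.fv q.fv ∧ Γ = Γ₁.add Γ₂ ∧ A = [.prod A₁ A₂] := by
  cases h with
  | pair h1 h2 hd => exact ⟨_, _, _, _, h1, h2, hd, rfl, rfl⟩

theorem restrict_pair_left {Γ Γa Γb : Env} {p₁ p₂ : Pat}
    (hsplit : Γ.restrict (.pair p₁ p₂) = Γa.add Γb)
    (ha : ∀ y, y ∉ p₁.fv → Γa y = []) (hb : ∀ y, y ∉ p₂.fv → Γb y = [])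
    (hd : Disjoint p₁.fv p₂.fv) : Γ.restrict p₁ = Γa := by
  funext y
  have hy2 := congrFun hsplit y
  by_cases hy : y ∈ p₁.fv
  · have hyp : y ∈ (Pat.pair p₁ p₂).fv := by simp [Pat.fv, hy]
    have hbnil : Γb y = [] := hb y (Finset.disjoint_left.mp hd hy)
    simp [Env.restrict, hyp, Env.add, hbnil] at hy2
    simp [Env.restrict, hy, hy2]
  · simp [Env.restrict, hy, (ha y hy).symm]

theorem restrict_pair_right {Γ Γa Γb : Env} {p₁ p₂ : Pat}
    (hsplit : Γ.restrict (.pair p₁ p₂) = Γa.add Γb)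
    (ha : ∀ y, y ∉ p₁.fv → Γa y = []) (hb : ∀ y, y ∉ p₂.fv → Γb y = [])
    (hd : Disjoint p₁.fv p₂.fv) : (Γ.erase p₁).restrict p₂ = Γb := by
  funext y
  have hy2 := congrFun hsplit y
  by_cases hy : y ∈ p₂.fv
  · have hy1 : y ∉ p₁.fv := Finset.disjoint_right.mp hd hy
    have hyp : y ∈ (Pat.pair p₁ p₂).fv := by simp [Pat.fv, hy]
    have hanil : Γa y = [] := ha y hy1
    simp [Env.restrict, hyp, Env.add, hanil] at hy2
    simp [Env.restrict, Env.erase, hy, hy1, hy2]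
  · simp [Env.restrict, hy, (hb y hy).symm]

theorem erase_erase (Γ : Env) (p₁ p₂ : Pat) :
    (Γ.erase p₁).erase p₂ = Γ.erase (.pair p₁ p₂) := by
  funext y
  by_cases h1 : y ∈ p₁.fv <;> by_cases h2 : y ∈ p₂.fv <;>
    simp [Env.erase, Pat.fv, h1, h2]
/-! ## Head step with derivation bookkeeping -/

theorem head : ∀ (n : ℕ) {Γ : Env} {t : Tm} {σ : Ty} (d : TDeriv Γ t σ),
    Γ = Env.empty → t.fv = ∅ → measT d ≤ n →
    (∃ a b, t = .pair a b) ∨ (∃ p s, t = .lam p s) ∨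
    (∃ (t' : Tm) (d' : TDeriv Env.empty t' σ), t'.fv = ∅ ∧
      (measT d' < measT d ∨ (measT d' ≤ measT d ∧ weight t' < weight t))) := by
  intro n
  induction n using Nat.strong_induction_on with
  | _ n ih =>
  intro Γ t σ d hΓ hfv hn
  subst hΓ
  match t with
  | .var x => simp [Tm.fv] at hfv
  | .lam p s => exact Or.inr (Or.inl ⟨p, s, rfl⟩)
  | .pair a b => exact Or.inl ⟨a, b, rfl⟩
  | .fail => exact (no_fail_ty d).elim
  | .app a b =>
      rcases invert_app d with ⟨Γ₁, Δ, A, ds, mb, hΓeq, hms⟩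
      rcases add_eq_empty hΓeq with ⟨h1, h2⟩
      subst h1; subst h2
      simp [Tm.fv, Finset.union_eq_empty] at hfv
      obtain ⟨hfa, hfb⟩ := hfv
      have hlt1 : measT ds < n := by omega
      rcases ih (measT ds) hlt1 ds rfl hfa le_rfl with ⟨a1, a2, rfl⟩ | ⟨p, s, rfl⟩ |
        ⟨a', da', hfa', hlt⟩
      · exact (no_pair_arr ds).elim
      · -- rule r₁ with empty list context
        rcases invert_abs ds with ⟨Γ₂, dss, pt, hΓ₂, hms2⟩
        have henv : (Γ₂.erase p).add Env.empty = Env.empty := by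
          rw [add_empty, ← hΓ₂]
        refine Or.inr (Or.inr ⟨.esub s p b, castT henv (TDeriv.esub dss pt mb), ?_, ?_⟩)
        · simp only [Tm.fv] at hfa ⊢
          rw [hfa, hfb]
          simp
        · left
          rw [measT_castT]
          simp only [measT]
          omega
      · -- step inside the function position
        have henv : Env.empty.add Env.empty = Env.empty := empty_add_empty
        refine Or.inr (Or.inr ⟨.app a' b, castT henv (TDeriv.app da' mb), ?_, ?_⟩)
        · simp [Tm.fv, Finset.union_eq_empty]; exact ⟨hfa', hfb⟩
        · rw [measT_castT]
          simp only [measT]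
          rcases hlt with h | ⟨h, hw⟩
          · left; omega
          · right
            refine ⟨by omega, ?_⟩
            simp only [weight]
            omega
  | .esub s p v =>
      rcases invert_esub d with ⟨Γ₁, Δ, A, ds, mv, pt, hΓeq, hms⟩
      rcases add_eq_empty hΓeq with ⟨h1, h2⟩
      subst h2
      simp [Tm.fv, Finset.union_eq_empty] at hfv
      obtain ⟨hfs, hfv2⟩ := hfv
      have hfssub : s.fv ⊆ p.fv := hfs
      match p, pt with
      | .var x, pt =>
          -- rule r₂
          have hrv : Γ₁.restrict (.var x) = Env.single x (Γ₁ x) := restrict_var Γ₁ x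
          have hAx : Γ₁ x = A := by
            have h3 := patty_var_inv pt
            have h4 := congrFun (hrv.symm.trans h3) x
            simpa [Env.single] using h4
          rcases substT ds x hfv2 (castA hAx.symm mv) with ⟨ds', hds'⟩
          have hkill : killE Γ₁ x = Env.empty := by
            funext y
            by_cases hy : y = x
            · simp [killE, hy, Env.empty]
            · have := congrFun h1 y
              simp [Env.erase, Pat.fv, hy] at this
              simp [killE, hy, this, Env.empty]
          refine Or.inr (Or.inr ⟨Tm.subst x v s, castT hkill ds', ?_, ?_⟩)
          · exact fv_subst_closed hfv2 (by simpa [Pat.fv] using hfssub)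
          · left
            rw [measT_castT]
            have := measM_castA hAx.symm mv
            omega
      | .pair p₁ p₂, pt =>
          rcases patty_pair_inv pt with ⟨Γa, Γb, A₁, A₂, pta, ptb, hdisj, hsplit, hA⟩
          subst hA
          rcases minvert1 mv with ⟨dv, hdv⟩
          have hlt1 : measT dv < n := by omega
          rcases ih (measT dv) hlt1 dv rfl hfv2 le_rfl with ⟨u₁, u₂, rfl⟩ | ⟨q, s', rfl⟩ |
            ⟨v', dv', hfv', hlt⟩
          · -- rule r₃ with empty list context
            rcases invert_pair dv with ⟨Γc, Γd, m₁, m₂, hcd, hm⟩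
            rcases add_eq_empty hcd with ⟨hc, hd2⟩
            subst hc; subst hd2
            have ha := patSup pta
            have hb := patSup ptb
            have lemA : Γ₁.restrict p₁ = Γa := restrict_pair_left hsplit ha hb hdisj
            have lemB : (Γ₁.erase p₁).restrict p₂ = Γb := restrict_pair_right hsplit ha hb hdisj
            have pta' : PatTy (Γ₁.restrict p₁) p₁ A₁ := lemA.symm ▸ pta
            have ptb' : PatTy ((Γ₁.erase p₁).restrict p₂) p₂ A₂ := lemB.symm ▸ ptb
            have henv : ((Γ₁.erase p₁).erase p₂).add Env.empty = Env.empty := by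
              rw [add_empty, erase_erase, h1]
            obtain ⟨hfu₁, hfu₂⟩ : u₁.fv = ∅ ∧ u₂.fv = ∅ := by
              simpa [Tm.fv, Finset.union_eq_empty] using hfv2
            refine Or.inr (Or.inr ⟨.esub (.esub s p₁ u₁) p₂ u₂,
              castT henv (TDeriv.esub (castT (add_empty _) (TDeriv.esub ds pta' m₁))
                ptb' m₂), ?_, ?_⟩)
            · simp only [Tm.fv, hfu₁, hfu₂, Finset.union_empty]
              apply Finset.eq_empty_of_forall_notMem
              intro y hy
              simp at hy
              have := hfssub hy.1.1
              simp [Pat.fv] at this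
              tauto
            · right
              constructor
              · rw [measT_castT]
                simp only [measT, measT_castT]
                omega
              · simp only [weight, pweight]
                omega
          · exact (no_lam_prod dv).elim
          · -- step inside the argument of the matching
            have henv : (Γ₁.erase (Pat.pair p₁ p₂)).add Env.empty = Env.empty := by
              rw [add_empty, h1]
            refine Or.inr (Or.inr ⟨.esub s (.pair p₁ p₂) v',
              castT henv (TDeriv.esub ds pt
                (castM empty_add_empty (MDeriv.cons dv' (.nil v')))), ?_, ?_⟩)
            · simp only [Tm.fv, hfv', Finset.union_empty]
              rw [Finset.sdiff_eq_empty_iff_subset]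
              exact hfs
            · rw [measT_castT]
              simp only [measT, measM_castM, measM]
              rcases hlt with h | ⟨h, hw⟩
              · left; omega
              · right
                refine ⟨by omega, ?_⟩
                simp only [weight]
                omega
/-! ## Extraction of product components -/

theorem extract : ∀ (n w : ℕ) {t : Tm} {A B : List Ty} (d : TDeriv Env.empty t (.prod A B)),
    t.fv = ∅ → measT d ≤ n → weight t ≤ w → MInhab A ∧ MInhab B := by
  intro n
  induction n using Nat.strong_induction_on with
  | _ n ihn =>
  intro w
  induction w using Nat.strong_induction_on with
  | _ w ihw =>
  intro t A B d hfv hn hw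
  rcases head (measT d) d rfl hfv le_rfl with ⟨a, b, rfl⟩ | ⟨p, s, rfl⟩ | ⟨t', d', hf', hlt⟩
  · rcases invert_pair d with ⟨Γ₁, Γ₂, m₁, m₂, hΓeq, -⟩
    rcases add_eq_empty hΓeq with ⟨h1, h2⟩
    subst h1; subst h2
    obtain ⟨hfa, hfb⟩ : a.fv = ∅ ∧ b.fv = ∅ := by
      simpa [Tm.fv, Finset.union_eq_empty] using hfv
    exact ⟨⟨a, hfa, ⟨m₁⟩⟩, ⟨b, hfb, ⟨m₂⟩⟩⟩
  · exact (no_lam_prod d).elim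
  · rcases hlt with h | ⟨h, hwlt⟩
    · exact ihn (measT d') (by omega) (weight t') d' hf' le_rfl le_rfl
    · exact ihw (weight t') (by omega) d' hf' (by omega) le_rfl
theorem part1 : ∀ {Γ : Env} {p : Pat} {A : List Ty}, PatTy Γ p A → MInhab A → EnvInhab Γ := by
  intro Γ p A h
  induction h with
  | var x B =>
      intro hA y hy
      by_cases hxy : y = x
      · subst hxy
        have hB : Env.single y B y = B := by simp [Env.single]
        rw [hB]
        exact hA
      · simp [Env.single, hxy] at hy
  | @pair Γ Δ p q A B h1 h2 hd ih1 ih2 =>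
      intro hA y hy
      obtain ⟨u, hu, ⟨m⟩⟩ := hA
      rcases minvert1 m with ⟨d, -⟩
      obtain ⟨hIA, hIB⟩ := extract (measT d) (weight u) d hu le_rfl le_rfl
      have e1 := ih1 hIA
      have e2 := ih2 hIB
      by_cases hyp : y ∈ p.fv
      · have hq : Δ y = [] := patSup h2 y (Finset.disjoint_left.mp hd hyp)
        have he : Env.add Γ Δ y = Γ y := by simp [Env.add, hq]
        rw [he] at hy ⊢
        exact e1 y hy
      · have hp2 : Γ y = [] := patSup h1 y hyp
        have he : Env.add Γ Δ y = Δ y := by simp [Env.add, hp2]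
        rw [he] at hy ⊢
        exact e2 y hy


/-- Inhabited pattern types give inhabited environments:
(1) if Γ ⊩ p : A and A is inhabited then every multiset type in the image of Γ is
inhabited; (2) if Γ ⊢ t : A and Γ is inhabited then A is inhabited. -/
theorem inhabitation_environments :
    (∀ (Γ : Env) (p : Pat) (A : List Ty), PatTy Γ p A → MInhab A → EnvInhab Γ) ∧
    (∀ (Γ : Env) (t : Tm) (A : List Ty), Nonempty (MDeriv Γ t A) → EnvInhab Γ →
      MInhab A) := by
  constructor
  · intro Γ p A h hA
    exact part1 h hA
  · intro Γ t A hm hΓ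
    exact part2_aux t.fv.toList Γ t A hm hΓ (by intro y hy; simpa using hy)
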